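/- arXiv:2103.05359 — 2 statements merged into one kernel-verified Lean document; each statement's English description precedes it below -/
import Mathlib

section
/- Let B be a Banach space, M a closed convex subset of B, τ < T reals, and for each Y ∈ M let Φ_Y : C([τ,T],M) → C_Y([τ,T],M) be a map (where C_Y([τ,T],M) is the set of continuous curves with value Y at τ) such that for some constant L ≥ 0 and some ω ∈ [0,1), ‖[Φ_Y(μ¹)](t) − [Φ_Y(μ²)](t)‖ ≤ L ∫_τ^t (t−s)^{−ω} sup_{r∈[τ,s]} ‖μ¹(r) − μ²(r)‖ ds for all t ∈ [τ,T] and all μ¹, μ² ∈ C([τ,T],M). Then Φ_Y has a unique fixed point in C_Y([τ,T],M). -/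
open Set MeasureTheory intervalIntegral Topology

lemma afpws_kernel_integrable (t ω : ℝ) (hω1 : ω < 1) (a b : ℝ) :
    IntervalIntegrable (fun s => (t - s) ^ (-ω)) volume a b := by
  have h := (intervalIntegrable_rpow' (r := -ω) (by linarith)
    (a := t - a) (b := t - b)).comp_sub_left t
  simpa using h

lemma afpws_kernel_val {t ω : ℝ} (hω1 : ω < 1) {a : ℝ} :
    (∫ s in a..t, (t - s) ^ (-ω)) = (t - a) ^ (1 - ω) / (1 - ω) := by
  have h1 : (∫ s in a..t, (t - s) ^ (-ω)) = ∫ x in (t - t)..(t - a), x ^ (-ω) :=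
    integral_comp_sub_left (fun x => x ^ (-ω)) t
  rw [h1, sub_self]
  rw [integral_rpow (Or.inl (by linarith))]
  rw [Real.zero_rpow (by linarith)]
  ring_nf

lemma afpws_kernel_bound {τ T L ω δ lam : ℝ} (hL : 0 ≤ L)
    (hω0 : 0 ≤ ω) (hω1 : ω < 1) (hδ : 0 < δ)
    (hδ1 : L * (δ ^ (1 - ω) / (1 - ω)) ≤ 1 / 4)
    (hlam : 0 ≤ lam)
    (hlam1 : L * ((T - τ) * (δ ^ (-ω) * Real.exp (-(lam * δ)))) ≤ 1 / 4)
    {t : ℝ} (ht : t ∈ Icc τ T) :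
    L * ∫ s in τ..t, (t - s) ^ (-ω) * Real.exp (lam * s) ≤
      1 / 2 * Real.exp (lam * t) := by
  obtain ⟨hτt, htT⟩ := ht
  have h1ω : (0:ℝ) < 1 - ω := by linarith
  have hke : ∀ a b : ℝ, IntervalIntegrable
      (fun s => (t - s) ^ (-ω) * Real.exp (lam * s)) volume a b := fun a b =>
    (afpws_kernel_integrable t ω hω1 a b).mul_continuousOn
      ((Real.continuous_exp.comp (continuous_const.mul continuous_id)).continuousOn)
  have hexp_pos := Real.exp_pos (lam * t)
  have piece : ∀ a : ℝ, a ≤ t →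
      (∫ s in a..t, (t - s) ^ (-ω) * Real.exp (lam * s)) ≤
        Real.exp (lam * t) * ((t - a) ^ (1 - ω) / (1 - ω)) := by
    intro a hat
    have hmono : (∫ s in a..t, (t - s) ^ (-ω) * Real.exp (lam * s)) ≤
        ∫ s in a..t, (t - s) ^ (-ω) * Real.exp (lam * t) := by
      apply integral_mono_on hat (hke a t)
        ((afpws_kernel_integrable t ω hω1 a t).mul_continuousOn continuousOn_const)
      intro x hx
      have : Real.exp (lam * x) ≤ Real.exp (lam * t) :=
        Real.exp_le_exp.2 (mul_le_mul_of_nonneg_left hx.2 hlam)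
      exact mul_le_mul_of_nonneg_left this (Real.rpow_nonneg (by linarith [hx.2]) _)
    calc (∫ s in a..t, (t - s) ^ (-ω) * Real.exp (lam * s))
        ≤ ∫ s in a..t, (t - s) ^ (-ω) * Real.exp (lam * t) := hmono
      _ = (∫ s in a..t, (t - s) ^ (-ω)) * Real.exp (lam * t) :=
          integral_mul_const _ _
      _ = Real.exp (lam * t) * ((t - a) ^ (1 - ω) / (1 - ω)) := by
          rw [afpws_kernel_val hω1]; ring
  rcases le_or_gt t (τ + δ) with hcase | hcase
  · have h2 := piece τ hτt
    have hrp : (t - τ) ^ (1 - ω) ≤ δ ^ (1 - ω) :=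
      Real.rpow_le_rpow (by linarith) (by linarith) h1ω.le
    have : L * ((t - τ) ^ (1 - ω) / (1 - ω)) ≤ 1 / 4 := by
      refine le_trans ?_ hδ1
      apply mul_le_mul_of_nonneg_left _ hL
      exact div_le_div_of_nonneg_right hrp h1ω.le
    nlinarith [Real.exp_pos (lam * t), mul_le_mul_of_nonneg_left h2 hL]
  · have hsplit : (∫ s in τ..(t - δ), (t - s) ^ (-ω) * Real.exp (lam * s)) +
        (∫ s in (t - δ)..t, (t - s) ^ (-ω) * Real.exp (lam * s)) =
        ∫ s in τ..t, (t - s) ^ (-ω) * Real.exp (lam * s) :=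
      integral_add_adjacent_intervals (hke τ (t - δ)) (hke (t - δ) t)
    have hτtδ : τ ≤ t - δ := by linarith
    have hp1 : (∫ s in τ..(t - δ), (t - s) ^ (-ω) * Real.exp (lam * s)) ≤
        (T - τ) * (δ ^ (-ω) * Real.exp (-(lam * δ))) * Real.exp (lam * t) := by
      have hmono : (∫ s in τ..(t - δ), (t - s) ^ (-ω) * Real.exp (lam * s)) ≤
          ∫ _s in τ..(t - δ), δ ^ (-ω) * Real.exp (lam * (t - δ)) := by
        apply integral_mono_on hτtδ (hke τ (t - δ)) intervalIntegrable_const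
        intro x hx
        have h1 : (t - x) ^ (-ω) ≤ δ ^ (-ω) :=
          Real.rpow_le_rpow_of_nonpos hδ (by linarith [hx.2]) (by linarith)
        have h2 : Real.exp (lam * x) ≤ Real.exp (lam * (t - δ)) :=
          Real.exp_le_exp.2 (mul_le_mul_of_nonneg_left hx.2 hlam)
        exact mul_le_mul h1 h2 (Real.exp_pos _).le (Real.rpow_nonneg hδ.le _)
      rw [intervalIntegral.integral_const] at hmono
      have hval : Real.exp (lam * (t - δ)) = Real.exp (-(lam * δ)) * Real.exp (lam * t) := by
        rw [← Real.exp_add]; ring_nf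
      have htd : t - δ - τ ≤ T - τ := by linarith
      calc (∫ s in τ..(t - δ), (t - s) ^ (-ω) * Real.exp (lam * s))
          ≤ (t - δ - τ) • (δ ^ (-ω) * Real.exp (lam * (t - δ))) := hmono
        _ = (t - δ - τ) * (δ ^ (-ω) * (Real.exp (-(lam * δ)) * Real.exp (lam * t))) := by
            rw [smul_eq_mul, hval]
        _ ≤ (T - τ) * (δ ^ (-ω) * (Real.exp (-(lam * δ)) * Real.exp (lam * t))) := by
            apply mul_le_mul_of_nonneg_right htd
            have : (0:ℝ) ≤ δ ^ (-ω) := Real.rpow_nonneg hδ.le _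
            positivity
        _ = (T - τ) * (δ ^ (-ω) * Real.exp (-(lam * δ))) * Real.exp (lam * t) := by ring
    have hp2 : (∫ s in (t - δ)..t, (t - s) ^ (-ω) * Real.exp (lam * s)) ≤
        Real.exp (lam * t) * (δ ^ (1 - ω) / (1 - ω)) := by
      have := piece (t - δ) (by linarith)
      simpa using this
    have hL1 : L * ((∫ s in τ..(t - δ), (t - s) ^ (-ω) * Real.exp (lam * s))) ≤
        1 / 4 * Real.exp (lam * t) := by
      calc L * ((∫ s in τ..(t - δ), (t - s) ^ (-ω) * Real.exp (lam * s)))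
          ≤ L * ((T - τ) * (δ ^ (-ω) * Real.exp (-(lam * δ))) * Real.exp (lam * t)) :=
            mul_le_mul_of_nonneg_left hp1 hL
        _ = L * ((T - τ) * (δ ^ (-ω) * Real.exp (-(lam * δ)))) * Real.exp (lam * t) := by ring
        _ ≤ 1 / 4 * Real.exp (lam * t) :=
            mul_le_mul_of_nonneg_right hlam1 (Real.exp_pos _).le
    have hL2 : L * ((∫ s in (t - δ)..t, (t - s) ^ (-ω) * Real.exp (lam * s))) ≤
        1 / 4 * Real.exp (lam * t) := by
      calc L * ((∫ s in (t - δ)..t, (t - s) ^ (-ω) * Real.exp (lam * s)))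
          ≤ L * (Real.exp (lam * t) * (δ ^ (1 - ω) / (1 - ω))) :=
            mul_le_mul_of_nonneg_left hp2 hL
        _ = L * (δ ^ (1 - ω) / (1 - ω)) * Real.exp (lam * t) := by ring
        _ ≤ 1 / 4 * Real.exp (lam * t) :=
            mul_le_mul_of_nonneg_right hδ1 (Real.exp_pos _).le
    rw [← hsplit]
    nlinarith [hL1, hL2]

lemma afpws_contraction {B : Type*} [NormedAddCommGroup B]
    {τ T L ω lam : ℝ} (hL : 0 ≤ L) (hω1 : ω < 1) (hlam : 0 ≤ lam)
    (hker : ∀ t ∈ Icc τ T,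
      L * ∫ s in τ..t, (t - s) ^ (-ω) * Real.exp (lam * s) ≤ 1 / 2 * Real.exp (lam * t))
    {μ₁ μ₂ : ℝ → B} {F : ℝ → B}
    (h₁ : ContinuousOn μ₁ (Icc τ T)) (h₂ : ContinuousOn μ₂ (Icc τ T))
    (hlip : ∀ t ∈ Icc τ T, ‖F t‖ ≤
      L * ∫ s in τ..t, (t - s) ^ (-ω) * (⨆ r : Icc τ s, ‖μ₁ ↑r - μ₂ ↑r‖)) :
    ∀ t ∈ Icc τ T, ‖F t‖ ≤ 1 / 2 * Real.exp (lam * t) *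
      (⨆ r : Icc τ T, Real.exp (-(lam * ↑r)) * ‖μ₁ ↑r - μ₂ ↑r‖) := by
  set D : ℝ := ⨆ r : Icc τ T, Real.exp (-(lam * ↑r)) * ‖μ₁ ↑r - μ₂ ↑r‖ with hD
  have hD0 : 0 ≤ D :=
    Real.iSup_nonneg fun r => mul_nonneg (Real.exp_pos _).le (norm_nonneg _)
  have hbdd : BddAbove (Set.range fun r : Icc τ T =>
      Real.exp (-(lam * ↑r)) * ‖μ₁ ↑r - μ₂ ↑r‖) := by
    have hg : ContinuousOn (fun r : ℝ => Real.exp (-(lam * r)) * ‖μ₁ r - μ₂ r‖) (Icc τ T) := by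
      apply ContinuousOn.mul
      · exact ((Real.continuous_exp.comp ((continuous_const.mul continuous_id).neg)).continuousOn)
      · exact (h₁.sub h₂).norm
    have := (isCompact_Icc.image_of_continuousOn hg).bddAbove
    rwa [Set.image_eq_range] at this
  intro t ht
  obtain ⟨hτt, htT⟩ := ht
  have hS : ∀ s ∈ Icc τ t, (⨆ r : Icc τ s, ‖μ₁ ↑r - μ₂ ↑r‖) ≤ Real.exp (lam * s) * D := by
    intro s hs
    apply Real.iSup_le _ (mul_nonneg (Real.exp_pos _).le hD0)
    intro r
    have hrT : (r : ℝ) ∈ Icc τ T := ⟨r.2.1, le_trans r.2.2 (le_trans hs.2 htT)⟩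
    have h1 : Real.exp (-(lam * ↑r)) * ‖μ₁ ↑r - μ₂ ↑r‖ ≤ D :=
      le_ciSup hbdd (⟨(r : ℝ), hrT⟩ : Icc τ T)
    have h2 : ‖μ₁ ↑r - μ₂ ↑r‖ ≤ Real.exp (lam * ↑r) * D := by
      have h3 := mul_le_mul_of_nonneg_left h1 (Real.exp_pos (lam * ↑r)).le
      rw [← mul_assoc, ← Real.exp_add] at h3
      simpa using h3
    calc ‖μ₁ ↑r - μ₂ ↑r‖ ≤ Real.exp (lam * ↑r) * D := h2
      _ ≤ Real.exp (lam * s) * D := by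
          apply mul_le_mul_of_nonneg_right _ hD0
          exact Real.exp_le_exp.2 (mul_le_mul_of_nonneg_left r.2.2 hlam)
  have hint : (∫ s in τ..t, (t - s) ^ (-ω) * (⨆ r : Icc τ s, ‖μ₁ ↑r - μ₂ ↑r‖)) ≤
      ∫ s in τ..t, ((t - s) ^ (-ω) * Real.exp (lam * s)) * D := by
    have hfi : IntervalIntegrable (fun s => ((t - s) ^ (-ω) * Real.exp (lam * s)) * D)
        volume τ t :=
      ((afpws_kernel_integrable t ω hω1 τ t).mul_continuousOn
        ((Real.continuous_exp.comp (continuous_const.mul continuous_id)).continuousOn)).mul_const D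
    by_cases hig : IntervalIntegrable
        (fun s => (t - s) ^ (-ω) * (⨆ r : Icc τ s, ‖μ₁ ↑r - μ₂ ↑r‖)) volume τ t
    · apply integral_mono_on hτt hig hfi
      intro x hx
      rw [mul_assoc]
      apply mul_le_mul_of_nonneg_left (hS x hx)
      exact Real.rpow_nonneg (by linarith [hx.2]) _
    · rw [intervalIntegral.integral_undef hig]
      apply intervalIntegral.integral_nonneg hτt
      intro x hx
      have : (0:ℝ) ≤ (t - x) ^ (-ω) := Real.rpow_nonneg (by linarith [hx.2]) _
      positivity
  calc ‖F t‖ ≤ L * ∫ s in τ..t, (t - s) ^ (-ω) * (⨆ r : Icc τ s, ‖μ₁ ↑r - μ₂ ↑r‖) :=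
        hlip t ⟨hτt, htT⟩
    _ ≤ L * ∫ s in τ..t, ((t - s) ^ (-ω) * Real.exp (lam * s)) * D :=
        mul_le_mul_of_nonneg_left hint hL
    _ = L * (∫ s in τ..t, (t - s) ^ (-ω) * Real.exp (lam * s)) * D := by
        rw [intervalIntegral.integral_mul_const]; ring
    _ ≤ 1 / 2 * Real.exp (lam * t) * D :=
        mul_le_mul_of_nonneg_right (hker t ⟨hτt, htT⟩) hD0

theorem abstract_fixed_point_weakly_singular
    {B : Type*} [NormedAddCommGroup B] [NormedSpace ℝ B] [CompleteSpace B]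
    (M : Set B) (hMclosed : IsClosed M) (hMconvex : Convex ℝ M)
    (τ T : ℝ) (hτT : τ < T)
    (Y : B) (hY : Y ∈ M)
    (Φ : (ℝ → B) → ℝ → B) (L ω : ℝ) (hL : 0 ≤ L) (hω0 : 0 ≤ ω) (hω1 : ω < 1)
    (hΦmaps : ∀ μ : ℝ → B, ContinuousOn μ (Icc τ T) → (∀ t ∈ Icc τ T, μ t ∈ M) →
      ContinuousOn (Φ μ) (Icc τ T) ∧ (∀ t ∈ Icc τ T, Φ μ t ∈ M) ∧ Φ μ τ = Y)
    (hΦlip : ∀ μ₁ μ₂ : ℝ → B,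
      ContinuousOn μ₁ (Icc τ T) → (∀ t ∈ Icc τ T, μ₁ t ∈ M) →
      ContinuousOn μ₂ (Icc τ T) → (∀ t ∈ Icc τ T, μ₂ t ∈ M) →
      ∀ t ∈ Icc τ T,
        ‖Φ μ₁ t - Φ μ₂ t‖ ≤
          L * ∫ s in τ..t, (t - s) ^ (-ω) * (⨆ r : Icc τ s, ‖μ₁ ↑r - μ₂ ↑r‖)) :
    ∃ μ : ℝ → B,
      (ContinuousOn μ (Icc τ T) ∧ (∀ t ∈ Icc τ T, μ t ∈ M) ∧ μ τ = Y ∧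
        ∀ t ∈ Icc τ T, Φ μ t = μ t) ∧
      ∀ μ' : ℝ → B,
        (ContinuousOn μ' (Icc τ T) ∧ (∀ t ∈ Icc τ T, μ' t ∈ M) ∧ μ' τ = Y ∧
          ∀ t ∈ Icc τ T, Φ μ' t = μ' t) →
        EqOn μ μ' (Icc τ T) := by
  classical
  have h1ω : (0:ℝ) < 1 - ω := by linarith
  -- choose δ
  set c : ℝ := (1 - ω) / (4 * (L + 1)) with hc
  have hcpos : 0 < c := by positivity
  set δ : ℝ := min (T - τ) (c ^ (1 / (1 - ω))) with hδdef
  have hδpos : 0 < δ := lt_min (by linarith) (Real.rpow_pos_of_pos hcpos _)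
  have hδ1 : L * (δ ^ (1 - ω) / (1 - ω)) ≤ 1 / 4 := by
    have hδle : δ ≤ c ^ (1 / (1 - ω)) := min_le_right _ _
    have h2 : δ ^ (1 - ω) ≤ (c ^ (1 / (1 - ω))) ^ (1 - ω) :=
      Real.rpow_le_rpow hδpos.le hδle h1ω.le
    have h3 : (c ^ (1 / (1 - ω))) ^ (1 - ω) = c := by
      rw [← Real.rpow_mul hcpos.le, one_div, inv_mul_cancel₀ h1ω.ne', Real.rpow_one]
    have h4 : δ ^ (1 - ω) ≤ c := h3 ▸ h2
    have h5 : L * (c / (1 - ω)) ≤ 1 / 4 := by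
      have hceq : c / (1 - ω) = 1 / (4 * (L + 1)) := by
        rw [hc]; field_simp
      rw [hceq, mul_one_div, div_le_div_iff₀ (by positivity) (by norm_num)]
      nlinarith
    refine le_trans ?_ h5
    exact mul_le_mul_of_nonneg_left (div_le_div_of_nonneg_right h4 h1ω.le) hL
  -- choose lam
  have hlamex : ∃ lam : ℝ, 0 ≤ lam ∧
      L * ((T - τ) * (δ ^ (-ω) * Real.exp (-(lam * δ)))) ≤ 1 / 4 := by
    have htend : Filter.Tendsto
        (fun l : ℝ => L * ((T - τ) * (δ ^ (-ω) * Real.exp (-(l * δ))))) Filter.atTop (𝓝 0) := by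
      have h0 : Filter.Tendsto (fun l : ℝ => -(l * δ)) Filter.atTop Filter.atBot := by
        apply Filter.tendsto_neg_atTop_atBot.comp
        exact Filter.Tendsto.atTop_mul_const hδpos Filter.tendsto_id
      have h1 : Filter.Tendsto (fun l : ℝ => Real.exp (-(l * δ))) Filter.atTop (𝓝 0) :=
        Real.tendsto_exp_atBot.comp h0
      have h2 := ((h1.const_mul (δ ^ (-ω))).const_mul (T - τ)).const_mul L
      simpa using h2
    have hev := (htend.eventually_le_const (by norm_num : (0:ℝ) < 1 / 4)).and
      (Filter.eventually_ge_atTop (0:ℝ))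
    obtain ⟨lam, h1, h2⟩ := hev.exists
    exact ⟨lam, h2, h1⟩
  obtain ⟨lam, hlam, hlam1⟩ := hlamex
  have hker : ∀ t ∈ Icc τ T,
      L * ∫ s in τ..t, (t - s) ^ (-ω) * Real.exp (lam * s) ≤ 1 / 2 * Real.exp (lam * t) :=
    fun t ht => afpws_kernel_bound hL hω0 hω1 hδpos hδ1 hlam hlam1 ht
  -- Picard iteration
  set seq : ℕ → ℝ → B := fun n => Φ^[n] (fun _ => Y) with hseqdef
  have hseq_succ : ∀ n, seq (n + 1) = Φ (seq n) := fun n =>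
    Function.iterate_succ_apply' Φ n _
  have hvalid : ∀ n, ContinuousOn (seq n) (Icc τ T) ∧ (∀ t ∈ Icc τ T, seq n t ∈ M) := by
    intro n
    induction n with
    | zero => exact ⟨continuousOn_const, fun t _ => hY⟩
    | succ n ih =>
      rw [hseq_succ]
      exact ⟨(hΦmaps _ ih.1 ih.2).1, (hΦmaps _ ih.1 ih.2).2.1⟩
  have hseqτ : ∀ n, seq n τ = Y := by
    intro n
    cases n with
    | zero => rfl
    | succ n => rw [hseq_succ]; exact (hΦmaps _ (hvalid n).1 (hvalid n).2).2.2
  -- weighted distances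
  set d : ℕ → ℝ := fun n =>
    ⨆ r : Icc τ T, Real.exp (-(lam * ↑r)) * ‖seq (n + 1) ↑r - seq n ↑r‖ with hd
  have hd0 : ∀ n, 0 ≤ d n := fun n =>
    Real.iSup_nonneg fun r => mul_nonneg (Real.exp_pos _).le (norm_nonneg _)
  -- the key contraction applied to iterates
  have hkey : ∀ (μ₁ μ₂ : ℝ → B), ContinuousOn μ₁ (Icc τ T) → (∀ t ∈ Icc τ T, μ₁ t ∈ M) →
      ContinuousOn μ₂ (Icc τ T) → (∀ t ∈ Icc τ T, μ₂ t ∈ M) →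
      ∀ t ∈ Icc τ T, ‖Φ μ₁ t - Φ μ₂ t‖ ≤ 1 / 2 * Real.exp (lam * t) *
        (⨆ r : Icc τ T, Real.exp (-(lam * ↑r)) * ‖μ₁ ↑r - μ₂ ↑r‖) := by
    intro μ₁ μ₂ hc₁ hm₁ hc₂ hm₂
    exact afpws_contraction hL hω1 hlam hker hc₁ hc₂ (hΦlip μ₁ μ₂ hc₁ hm₁ hc₂ hm₂)
  have hdrec : ∀ n, d (n + 1) ≤ 1 / 2 * d n := by
    intro n
    apply Real.iSup_le _ (mul_nonneg (by norm_num) (hd0 n))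
    intro r
    have hrT : (r : ℝ) ∈ Icc τ T := r.2
    have hk := hkey (seq (n + 1)) (seq n) (hvalid (n + 1)).1 (hvalid (n + 1)).2
      (hvalid n).1 (hvalid n).2 r hrT
    rw [← hseq_succ (n + 1), ← hseq_succ n] at hk
    have h3 := mul_le_mul_of_nonneg_left hk (Real.exp_pos (-(lam * ↑r))).le
    calc Real.exp (-(lam * ↑r)) * ‖seq (n + 1 + 1) ↑r - seq (n + 1) ↑r‖
        ≤ Real.exp (-(lam * ↑r)) * (1 / 2 * Real.exp (lam * ↑r) * d n) := h3
      _ = 1 / 2 * (Real.exp (-(lam * ↑r)) * Real.exp (lam * ↑r)) * d n := by ring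
      _ = 1 / 2 * d n := by rw [← Real.exp_add, neg_add_cancel, Real.exp_zero, mul_one]
  have hdgeo : ∀ n, d n ≤ (1 / 2) ^ n * d 0 := by
    intro n
    induction n with
    | zero => simp
    | succ n ih =>
      calc d (n + 1) ≤ 1 / 2 * d n := hdrec n
        _ ≤ 1 / 2 * ((1 / 2) ^ n * d 0) := by linarith [hdrec n, ih, hd0 n]
        _ = (1 / 2) ^ (n + 1) * d 0 := by ring
  -- pointwise geometric bound
  set C : ℝ := Real.exp (lam * T) * d 0 with hC
  have hC0 : 0 ≤ C := mul_nonneg (Real.exp_pos _).le (hd0 0)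
  have hpt : ∀ n, ∀ t ∈ Icc τ T, ‖seq (n + 1) t - seq n t‖ ≤ C * (1 / 2) ^ n := by
    intro n t ht
    have hbdd : BddAbove (Set.range fun r : Icc τ T =>
        Real.exp (-(lam * ↑r)) * ‖seq (n + 1) ↑r - seq n ↑r‖) := by
      have hg : ContinuousOn
          (fun r : ℝ => Real.exp (-(lam * r)) * ‖seq (n + 1) r - seq n r‖) (Icc τ T) := by
        apply ContinuousOn.mul
        · exact ((Real.continuous_exp.comp
            ((continuous_const.mul continuous_id).neg)).continuousOn)
        · exact ((hvalid (n + 1)).1.sub (hvalid n).1).norm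
      have := (isCompact_Icc.image_of_continuousOn hg).bddAbove
      rwa [Set.image_eq_range] at this
    have h1 : Real.exp (-(lam * t)) * ‖seq (n + 1) t - seq n t‖ ≤ d n :=
      le_ciSup hbdd (⟨t, ht⟩ : Icc τ T)
    have h2 : ‖seq (n + 1) t - seq n t‖ ≤ Real.exp (lam * t) * d n := by
      have h3 := mul_le_mul_of_nonneg_left h1 (Real.exp_pos (lam * t)).le
      rw [← mul_assoc, ← Real.exp_add] at h3
      simpa using h3
    calc ‖seq (n + 1) t - seq n t‖ ≤ Real.exp (lam * t) * d n := h2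
      _ ≤ Real.exp (lam * T) * ((1 / 2) ^ n * d 0) := by
          apply mul_le_mul _ (hdgeo n) (hd0 n) (Real.exp_pos _).le
          exact Real.exp_le_exp.2 (mul_le_mul_of_nonneg_left ht.2 hlam)
      _ = C * (1 / 2) ^ n := by rw [hC]; ring
  have hdist : ∀ t ∈ Icc τ T, ∀ n, dist (seq n t) (seq (n + 1) t) ≤ C * (1 / 2) ^ n := by
    intro t ht n
    rw [dist_eq_norm, norm_sub_rev]
    exact hpt n t ht
  -- limits
  have hex : ∀ t ∈ Icc τ T, ∃ x, Filter.Tendsto (fun n => seq n t) Filter.atTop (𝓝 x) := by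
    intro t ht
    apply cauchySeq_tendsto_of_complete
    exact cauchySeq_of_le_geometric (1 / 2) C (by norm_num) (hdist t ht)
  choose! μ hμ using hex
  have hdistlim : ∀ t ∈ Icc τ T, ∀ n, dist (seq n t) (μ t) ≤ C * (1 / 2) ^ n / (1 - 1 / 2) :=
    fun t ht n => dist_le_of_le_geometric_of_tendsto (1 / 2) C (by norm_num)
      (hdist t ht) (hμ t ht) n
  have hgeo0 : Filter.Tendsto (fun n : ℕ => C * (1 / 2) ^ n / (1 - 1 / 2))
      Filter.atTop (𝓝 0) := by
    have h1 : Filter.Tendsto (fun n : ℕ => ((1:ℝ) / 2) ^ n) Filter.atTop (𝓝 0) :=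
      tendsto_pow_atTop_nhds_zero_of_lt_one (by norm_num) (by norm_num)
    have h2 := (h1.const_mul C).div_const (1 - 1 / 2)
    simpa using h2
  have hunif : TendstoUniformlyOn seq μ Filter.atTop (Icc τ T) := by
    rw [Metric.tendstoUniformlyOn_iff]
    intro ε hε
    filter_upwards [hgeo0.eventually_lt_const hε] with n hn t ht
    calc dist (μ t) (seq n t) = dist (seq n t) (μ t) := dist_comm _ _
      _ ≤ C * (1 / 2) ^ n / (1 - 1 / 2) := hdistlim t ht n
      _ < ε := hn
  have hμcont : ContinuousOn μ (Icc τ T) :=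
    hunif.continuousOn (Filter.Eventually.of_forall fun n => (hvalid n).1).frequently
  have hμmem : ∀ t ∈ Icc τ T, μ t ∈ M := fun t ht =>
    hMclosed.mem_of_tendsto (hμ t ht) (Filter.Eventually.of_forall fun n => (hvalid n).2 t ht)
  have hττ : τ ∈ Icc τ T := ⟨le_refl τ, hτT.le⟩
  have hμτ : μ τ = Y := by
    have h1 : Filter.Tendsto (fun n => seq n τ) Filter.atTop (𝓝 Y) := by
      simp only [hseqτ]
      exact tendsto_const_nhds
    exact tendsto_nhds_unique (hμ τ hττ) h1
  -- fixed point property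
  have hfix : ∀ t ∈ Icc τ T, Φ μ t = μ t := by
    intro t ht
    set cst : ℝ := 1 / 2 * Real.exp (lam * t) * Real.exp (-(lam * τ)) + 1 with hcst
    have hcstpos : 0 < cst := by positivity
    have hmain : ∀ ε : ℝ, 0 < ε → ‖Φ μ t - μ t‖ ≤ cst * ε := by
      intro ε hε
      obtain ⟨N, hN⟩ := Filter.eventually_atTop.mp
        (Metric.tendstoUniformlyOn_iff.mp hunif ε hε)
      have hNN := hN N (le_refl N)
      have hNN1 := hN (N + 1) (Nat.le_succ N)
      have hDb : (⨆ r : Icc τ T, Real.exp (-(lam * ↑r)) * ‖μ ↑r - seq N ↑r‖) ≤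
          Real.exp (-(lam * τ)) * ε := by
        apply Real.iSup_le _ (by positivity)
        intro r
        have h1 : Real.exp (-(lam * ↑r)) ≤ Real.exp (-(lam * τ)) := by
          apply Real.exp_le_exp.2
          have := mul_le_mul_of_nonneg_left r.2.1 hlam
          linarith
        have h2 : ‖μ ↑r - seq N ↑r‖ ≤ ε := by
          rw [← dist_eq_norm]
          exact (hNN ↑r r.2).le
        exact mul_le_mul h1 h2 (norm_nonneg _) (Real.exp_pos _).le
      have hk := hkey μ (seq N) hμcont hμmem (hvalid N).1 (hvalid N).2 t ht
      have hterm1 : ‖Φ μ t - Φ (seq N) t‖ ≤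
          1 / 2 * Real.exp (lam * t) * (Real.exp (-(lam * τ)) * ε) := by
        refine le_trans hk ?_
        apply mul_le_mul_of_nonneg_left hDb (by positivity)
      have hterm2 : ‖Φ (seq N) t - μ t‖ ≤ ε := by
        rw [← hseq_succ N, ← dist_eq_norm]
        rw [dist_comm]
        exact (hNN1 t ht).le
      calc ‖Φ μ t - μ t‖ ≤ ‖Φ μ t - Φ (seq N) t‖ + ‖Φ (seq N) t - μ t‖ :=
            norm_sub_le_norm_sub_add_norm_sub _ _ _
        _ ≤ 1 / 2 * Real.exp (lam * t) * (Real.exp (-(lam * τ)) * ε) + ε := by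
            linarith
        _ = cst * ε := by rw [hcst]; ring
    have hzero : ‖Φ μ t - μ t‖ ≤ 0 := by
      by_contra hpos
      push_neg at hpos
      have h1 := hmain (‖Φ μ t - μ t‖ / (2 * cst)) (by positivity)
      have h2 : cst * (‖Φ μ t - μ t‖ / (2 * cst)) = ‖Φ μ t - μ t‖ / 2 := by
        field_simp
      rw [h2] at h1
      linarith
    have : Φ μ t - μ t = 0 := by
      have := norm_nonneg (Φ μ t - μ t)
      have h2 : ‖Φ μ t - μ t‖ = 0 := le_antisymm hzero this
      exact norm_eq_zero.mp h2
    exact sub_eq_zero.mp this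
  refine ⟨μ, ⟨hμcont, hμmem, hμτ, hfix⟩, ?_⟩
  -- uniqueness
  rintro μ' ⟨hc', hm', hτ', hfix'⟩
  set D : ℝ := ⨆ r : Icc τ T, Real.exp (-(lam * ↑r)) * ‖μ ↑r - μ' ↑r‖ with hDdef
  have hD0 : 0 ≤ D :=
    Real.iSup_nonneg fun r => mul_nonneg (Real.exp_pos _).le (norm_nonneg _)
  have hkD : ∀ t ∈ Icc τ T, Real.exp (-(lam * t)) * ‖μ t - μ' t‖ ≤ 1 / 2 * D := by
    intro t ht
    have hk := hkey μ μ' hμcont hμmem hc' hm' t ht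
    rw [hfix t ht, hfix' t ht] at hk
    have h3 := mul_le_mul_of_nonneg_left hk (Real.exp_pos (-(lam * t))).le
    calc Real.exp (-(lam * t)) * ‖μ t - μ' t‖
        ≤ Real.exp (-(lam * t)) * (1 / 2 * Real.exp (lam * t) * D) := h3
      _ = 1 / 2 * (Real.exp (-(lam * t)) * Real.exp (lam * t)) * D := by ring
      _ = 1 / 2 * D := by rw [← Real.exp_add, neg_add_cancel, Real.exp_zero, mul_one]
  have hDle : D ≤ 1 / 2 * D :=
    Real.iSup_le (fun r => hkD ↑r r.2) (by positivity)
  have hDzero : D = 0 := by linarith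
  intro t ht
  have h1 := hkD t ht
  rw [hDzero] at h1
  have h2 : ‖μ t - μ' t‖ ≤ 0 := by
    have hepos := Real.exp_pos (-(lam * t))
    nlinarith [norm_nonneg (μ t - μ' t)]
  have h3 : μ t - μ' t = 0 :=
    norm_eq_zero.mp (le_antisymm h2 (norm_nonneg _))
  exact sub_eq_zero.mp h3
end

section
/- Let μ, μ̃ : [τ,T] → ℝ≥0 be continuous with μ(t) ≤ c + L ∫_τ^t (t−s)^{−ω} μ(s) ds for constants c, L ≥ 0 and ω ∈ [0,1). Then μ(t) ≤ c · E_{1−ω}(L Γ(1−ω)(t−τ)^{1−ω}) for all t ∈ [τ,T], where E_β denotes the Mittag-Leffler function E_β(x) = Σ_{k≥0} x^k / Γ(βk+1). -/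
open Set MeasureTheory intervalIntegral

lemma real_beta {p q a : ℝ} (hp : 0 < p) (hq : 0 < q) (ha : 0 < a) :
    ∫ x in (0:ℝ)..a, x ^ (p - 1) * (a - x) ^ (q - 1)
      = Real.Gamma p * Real.Gamma q / Real.Gamma (p + q) * a ^ (p + q - 1) := by
  have hpc : 0 < (p : ℂ).re := by simpa using hp
  have hqc : 0 < (q : ℂ).re := by simpa using hq
  have hB := Complex.betaIntegral_scaled (p : ℂ) (q : ℂ) ha
  have hG := Complex.Gamma_mul_Gamma_eq_betaIntegral hpc hqc
  have hGpq : Real.Gamma (p + q) ≠ 0 := (Real.Gamma_pos_of_pos (by linarith)).ne'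
  have key : ((∫ x in (0:ℝ)..a, x ^ (p - 1) * (a - x) ^ (q - 1) : ℝ) : ℂ)
      = ((Real.Gamma p * Real.Gamma q / Real.Gamma (p + q) * a ^ (p + q - 1) : ℝ) : ℂ) := by
    have h1 : ∫ x in (0:ℝ)..a, ((x ^ (p - 1) * (a - x) ^ (q - 1) : ℝ) : ℂ)
        = ((∫ x in (0:ℝ)..a, x ^ (p - 1) * (a - x) ^ (q - 1) : ℝ) : ℂ) :=
      RCLike.intervalIntegral_ofReal
    rw [← h1]
    have : ∫ x in (0:ℝ)..a, ((x ^ (p - 1) * (a - x) ^ (q - 1) : ℝ) : ℂ)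
        = ∫ x in (0:ℝ)..a, (x : ℂ) ^ ((p : ℂ) - 1) * ((a : ℂ) - x) ^ ((q : ℂ) - 1) := by
      refine intervalIntegral.integral_congr (fun x hx => ?_)
      rw [uIcc_of_le ha.le] at hx
      push_cast
      rw [Complex.ofReal_cpow hx.1 (p - 1), Complex.ofReal_cpow (by linarith [hx.2]) (q - 1)]
      push_cast
      ring_nf
    rw [this, hB]
    have hne : Complex.Gamma ((p : ℂ) + q) ≠ 0 := by
      rw [← Complex.ofReal_add, Complex.Gamma_ofReal]
      exact_mod_cast hGpq
    have hbeta : Complex.betaIntegral p q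
        = Complex.Gamma p * Complex.Gamma q / Complex.Gamma ((p : ℂ) + q) := by
      rw [eq_div_iff hne, mul_comm]
      exact hG.symm
    rw [hbeta, ← Complex.ofReal_add, Complex.Gamma_ofReal, Complex.Gamma_ofReal,
      Complex.Gamma_ofReal, Complex.ofReal_mul, Complex.ofReal_cpow ha.le,
      Complex.ofReal_div, Complex.ofReal_mul]
    push_cast
    ring
  exact_mod_cast key

lemma conv_beta {p q τ t : ℝ} (hp : 0 < p) (hq : 0 < q) (h : τ < t) :
    ∫ s in τ..t, (t - s) ^ (q - 1) * (s - τ) ^ (p - 1)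
      = Real.Gamma p * Real.Gamma q / Real.Gamma (p + q) * (t - τ) ^ (p + q - 1) := by
  have h0 : (∫ x in (0:ℝ)..(t - τ), (t - (τ + x)) ^ (q - 1) * ((τ + x) - τ) ^ (p - 1))
      = ∫ s in τ..t, (t - s) ^ (q - 1) * (s - τ) ^ (p - 1) := by
    rw [intervalIntegral.integral_comp_add_left
      (fun s => (t - s) ^ (q - 1) * (s - τ) ^ (p - 1)) τ]
    norm_num
  rw [← h0]
  have h1 : (∫ x in (0:ℝ)..(t - τ), (t - (τ + x)) ^ (q - 1) * ((τ + x) - τ) ^ (p - 1))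
      = ∫ x in (0:ℝ)..(t - τ), x ^ (p - 1) * ((t - τ) - x) ^ (q - 1) := by
    refine intervalIntegral.integral_congr (fun x hx => ?_)
    have : t - (τ + x) = (t - τ) - x := by ring
    rw [this, add_sub_cancel_left, mul_comm]
  rw [h1]
  exact real_beta hp hq (by linarith)
lemma ml_summable {β x : ℝ} (hβ : 0 < β) (hx : 0 ≤ x) :
    Summable (fun k : ℕ => x ^ k / Real.Gamma (β * k + 1)) := by
  set s : ℝ := min 1 ((1 / (2 * (x + 1))) ^ (1/β)) with hs_def
  have hs0 : 0 < s := lt_min one_pos (Real.rpow_pos_of_pos (by positivity) _)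
  have hs1 : s ≤ 1 := min_le_left _ _
  have hsβ : x * s ^ β ≤ 1 / 2 := by
    have h1 : s ^ β ≤ 1 / (2 * (x + 1)) := by
      calc s ^ β ≤ ((1 / (2 * (x + 1))) ^ (1/β)) ^ β :=
            Real.rpow_le_rpow hs0.le (min_le_right _ _) hβ.le
        _ = 1 / (2 * (x + 1)) := by
            rw [← Real.rpow_mul (by positivity), one_div β, inv_mul_cancel₀ hβ.ne',
              Real.rpow_one]
    calc x * s ^ β ≤ x * (1 / (2 * (x + 1))) :=
          mul_le_mul_of_nonneg_left h1 hx
      _ ≤ 1 / 2 := by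
          rw [mul_one_div, div_le_div_iff₀ (by positivity) (by norm_num : (0:ℝ) < 2)]
          linarith
  obtain ⟨C', hC'⟩ : ∃ C', ∀ n : ℕ, (1/s) ^ n / (n.factorial : ℝ) ≤ C' := by
    obtain ⟨C', hC'⟩ :=
      (FloorSemiring.tendsto_pow_div_factorial_atTop (K := ℝ) (1/s)).bddAbove_range
    exact ⟨C', fun n => hC' ⟨n, rfl⟩⟩
  have hC'0 : 0 < C' := lt_of_lt_of_le one_pos (by simpa using hC' 0)
  obtain ⟨K, hK⟩ : ∃ K : ℕ, 2 ≤ β * K := by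
    refine ⟨⌈2/β⌉₊, ?_⟩
    calc (2:ℝ) = β * (2/β) := by field_simp
      _ ≤ β * ⌈2/β⌉₊ := by
          have := Nat.le_ceil (2/β)
          nlinarith
  rw [← summable_nat_add_iff K]
  have hbound : ∀ k : ℕ, x ^ (k + K) / Real.Gamma (β * ((k + K : ℕ) : ℝ) + 1)
      ≤ (C'/s) * (1/2) ^ k := by
    intro k
    set m : ℕ := k + K with hm_def
    show x ^ m / Real.Gamma (β * m + 1) ≤ (C'/s) * (1/2) ^ k
    have hβm : 2 ≤ β * m := le_trans hK (by
      have : (K:ℝ) ≤ (m:ℝ) := by exact_mod_cast Nat.le_add_left K k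
      nlinarith)
    set n : ℕ := ⌊β * m⌋₊ with hn_def
    have hn2 : 2 ≤ n := Nat.le_floor (by exact_mod_cast hβm)
    have hn2' : (2:ℝ) ≤ n := by exact_mod_cast hn2
    have hfloor_le : (n:ℝ) ≤ β * m := Nat.floor_le (by linarith)
    have hlt : β * m - 1 ≤ (n:ℝ) := by
      have := Nat.lt_floor_add_one (β * m)
      linarith
    have hΓpos : 0 < Real.Gamma (β * m + 1) := Real.Gamma_pos_of_pos (by linarith)
    have hΓge : (n.factorial : ℝ) ≤ Real.Gamma (β * m + 1) := by
      rw [← Real.Gamma_nat_eq_factorial]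
      rcases eq_or_lt_of_le (by linarith : ((n:ℝ) + 1) ≤ β * m + 1) with h|h
      · rw [h]
      · exact (Real.Gamma_strictMonoOn_Ici
          (by simp only [mem_Ici]; linarith)
          (by simp only [mem_Ici]; linarith) h).le
    have hfacpos : (0:ℝ) < n.factorial := by exact_mod_cast Nat.factorial_pos n
    have hinv : (1 : ℝ) / (n.factorial : ℝ) ≤ C' * s ^ (n:ℕ) := by
      have h2 := hC' n
      have h3 : (1/s)^n / (n.factorial : ℝ) * s ^ n ≤ C' * s ^ n :=
        mul_le_mul_of_nonneg_right h2 (by positivity)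
      have e : (1/s)^n * s^n = (1:ℝ) := by
        rw [div_pow, one_pow, one_div, inv_mul_cancel₀ (by positivity)]
      have e2 : (1/s)^n / (n.factorial : ℝ) * s ^ n = ((1/s)^n * s^n) / (n.factorial : ℝ) := by
        ring
      rw [e2, e] at h3
      simpa using h3
    have hsn : s ^ (n:ℕ) ≤ s ^ (β * m - 1) := by
      rw [← Real.rpow_natCast s n]
      exact Real.rpow_le_rpow_of_exponent_ge hs0 hs1 hlt
    have hsplit : s ^ (β * m - 1) = (s ^ β) ^ m / s := by
      rw [Real.rpow_sub hs0, Real.rpow_one, Real.rpow_mul hs0.le, Real.rpow_natCast]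
    calc x ^ m / Real.Gamma (β * m + 1)
        ≤ x ^ m / (n.factorial : ℝ) := by gcongr
      _ = x ^ m * (1 / (n.factorial : ℝ)) := by ring
      _ ≤ x ^ m * (C' * s ^ (n:ℕ)) :=
          mul_le_mul_of_nonneg_left hinv (by positivity)
      _ ≤ x ^ m * (C' * s ^ (β * m - 1)) := by
          have := mul_le_mul_of_nonneg_left hsn hC'0.le
          exact mul_le_mul_of_nonneg_left this (by positivity)
      _ = (C'/s) * (x * s ^ β) ^ m := by
          rw [hsplit, mul_pow]; ring
      _ ≤ (C'/s) * (1/2) ^ m := by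
          have h4 : (x * s ^ β) ^ m ≤ (1/2) ^ m :=
            pow_le_pow_left₀ (by positivity) hsβ m
          exact mul_le_mul_of_nonneg_left h4 (by positivity)
      _ ≤ (C'/s) * (1/2) ^ k := by
          have h5 : ((1:ℝ)/2) ^ m ≤ (1/2) ^ k :=
            pow_le_pow_of_le_one (by norm_num) (by norm_num) (Nat.le_add_right k K)
          exact mul_le_mul_of_nonneg_left h5 (by positivity)
  refine Summable.of_nonneg_of_le (fun k => ?_) hbound
    (summable_geometric_two.mul_left (C'/s))
  have : (0:ℝ) < Real.Gamma (β * (k + K) + 1) := Real.Gamma_pos_of_pos (by positivity)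
  positivity
noncomputable def mittagLeffler (β x : ℝ) : ℝ := ∑' k : ℕ, x ^ k / Real.Gamma (β * k + 1)

set_option maxHeartbeats 1000000 in
theorem fractional_gronwall
    (τ T c L ω : ℝ) (hτT : τ ≤ T) (hc : 0 ≤ c) (hL : 0 ≤ L)
    (hω0 : 0 ≤ ω) (hω1 : ω < 1) (μ : ℝ → ℝ)
    (hcont : ContinuousOn μ (Icc τ T))
    (hnonneg : ∀ t ∈ Icc τ T, 0 ≤ μ t)
    (hineq : ∀ t ∈ Icc τ T, μ t ≤ c + L * ∫ s in τ..t, (t - s) ^ (-ω) * μ s) :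
    ∀ t ∈ Icc τ T,
      μ t ≤ c * mittagLeffler (1 - ω) (L * Real.Gamma (1 - ω) * (t - τ) ^ (1 - ω)) := by
  intro t ht
  set β : ℝ := 1 - ω with hβ_def
  have hβ0 : (0:ℝ) < β := by rw [hβ_def]; linarith
  have hΓβ : 0 < Real.Gamma β := Real.Gamma_pos_of_pos hβ0
  set C : ℝ := L * Real.Gamma β with hC_def
  have hC0 : 0 ≤ C := mul_nonneg hL hΓβ.le
  set a : ℕ → ℝ → ℝ := fun k r => C ^ k * (r - τ) ^ (β * k) / Real.Gamma (β * k + 1)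
    with ha_def
  obtain ⟨s₀, hs₀, hM'⟩ := isCompact_Icc.exists_isMaxOn (nonempty_Icc.mpr hτT) hcont
  have hM : ∀ r ∈ Icc τ T, μ r ≤ μ s₀ := fun r hr => hM' hr
  set M : ℝ := μ s₀ with hM_def
  have hM0 : 0 ≤ M := hnonneg s₀ hs₀
  have hΓpos : ∀ k : ℕ, 0 < Real.Gamma (β * k + 1) :=
    fun k => Real.Gamma_pos_of_pos (by positivity)
  have ha_nonneg : ∀ k : ℕ, ∀ r, τ ≤ r → 0 ≤ a k r := by
    intro k r hr
    have h1 : (0:ℝ) ≤ (r - τ) ^ (β * k) := Real.rpow_nonneg (by linarith) _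
    have h2 := hΓpos k
    rw [ha_def]
    positivity
  have ha_zero : ∀ r : ℝ, a 0 r = 1 := by
    intro r
    simp [ha_def, Real.Gamma_one]
  have ha_cont : ∀ k : ℕ, Continuous (a k) := by
    intro k
    have h1 : Continuous fun r : ℝ => (r - τ) ^ (β * k) :=
      (continuous_id.sub continuous_const).rpow_const (fun x => Or.inr (by positivity))
    exact (continuous_const.mul h1).div_const _
  have hker : ∀ r : ℝ, τ ≤ r → IntervalIntegrable (fun u => (r - u) ^ (-ω)) volume τ r := by
    intro r hr
    have h1 : IntervalIntegrable (fun y : ℝ => y ^ (-ω)) volume (r - τ) (r - r) :=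
      intervalIntegral.intervalIntegrable_rpow' (by linarith)
    have h2 := h1.comp_sub_left r
    simpa using h2
  have hker_nonneg : ∀ r u : ℝ, u ≤ r → 0 ≤ (r - u) ^ (-ω) :=
    fun r u hu => Real.rpow_nonneg (by linarith) _
  -- the key convolution step
  have hstep : ∀ k : ℕ, ∀ r : ℝ, τ < r →
      L * ∫ u in τ..r, (r - u) ^ (-ω) * a k u = a (k + 1) r := by
    intro k r hr
    have hpk : (0:ℝ) < β * k + 1 := by positivity
    have e1 : ∀ u : ℝ, (r - u) ^ (-ω) * a k u
        = (C ^ k / Real.Gamma (β * k + 1))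
            * ((r - u) ^ (β - 1) * (u - τ) ^ ((β * k + 1) - 1)) := by
      intro u
      rw [ha_def]
      simp only [show β - 1 = -ω by rw [hβ_def]; ring,
        show (β * (k:ℝ) + 1) - 1 = β * k by ring]
      ring
    have e2 : (∫ u in τ..r, (r - u) ^ (-ω) * a k u)
        = (C ^ k / Real.Gamma (β * k + 1))
            * ∫ u in τ..r, (r - u) ^ (β - 1) * (u - τ) ^ ((β * k + 1) - 1) := by
      rw [← intervalIntegral.integral_const_mul]
      exact intervalIntegral.integral_congr (fun u _ => e1 u)
    have e3 : (∫ u in τ..r, (r - u) ^ (β - 1) * (u - τ) ^ ((β * k + 1) - 1))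
        = Real.Gamma (β * k + 1) * Real.Gamma β / Real.Gamma (β * k + 1 + β)
            * (r - τ) ^ (β * k + 1 + β - 1) :=
      conv_beta hpk hβ0 hr
    rw [e2, e3, ha_def]
    simp only [show β * ((k:ℝ) + 1) + 1 = β * k + 1 + β by ring] -- adjust? goal uses β*↑(k+1)
    have hcast : (((k:ℕ) + 1 : ℕ) : ℝ) = (k : ℝ) + 1 := by push_cast; ring
    rw [hcast]
    simp only [show β * ((k:ℝ) + 1) = β * k + 1 + β - 1 by ring,
      show β * ((k:ℝ) + 1) + 1 = β * k + 1 + β by ring]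
    field_simp [hC_def]
    have hG : Real.Gamma (β * (k:ℝ) + 1 + β) ≠ 0 := (Real.Gamma_pos_of_pos (by positivity)).ne'
    rw [sub_add_cancel, eq_div_iff hG, hC_def]
    ring
  -- integrability of kernel times a k
  have hint_a : ∀ k : ℕ, ∀ r : ℝ, τ ≤ r →
      IntervalIntegrable (fun u => (r - u) ^ (-ω) * a k u) volume τ r :=
    fun k r hr => (hker r hr).mul_continuousOn (ha_cont k).continuousOn
  -- main induction
  have main : ∀ n : ℕ, ∀ r ∈ Icc τ T,
      μ r ≤ c * (∑ k ∈ Finset.range n, a k r) + M * a n r := by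
    intro n
    induction n with
    | zero =>
      intro r hr
      simpa [ha_zero r] using hM r hr
    | succ n ih =>
      intro r hr
      rcases eq_or_lt_of_le hr.1 with he | hlt
      · -- r = τ
        have hμr : μ r ≤ c := by
          have h0 := hineq r hr
          rw [he, intervalIntegral.integral_same] at h0
          simpa using h0
        have hsum1 : (1:ℝ) ≤ ∑ k ∈ Finset.range (n + 1), a k r := by
          have h1 : a 0 r ≤ ∑ k ∈ Finset.range (n + 1), a k r :=
            Finset.single_le_sum (fun k _ => ha_nonneg k r hr.1)
              (Finset.mem_range.mpr (Nat.succ_pos n))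
          rwa [ha_zero r] at h1
        calc μ r ≤ c := hμr
          _ ≤ c * ∑ k ∈ Finset.range (n + 1), a k r := le_mul_of_one_le_right hc hsum1
          _ ≤ _ := le_add_of_nonneg_right (mul_nonneg hM0 (ha_nonneg _ r hr.1))
      · -- τ < r
        set g : ℝ → ℝ := fun u => c * (∑ k ∈ Finset.range n, a k u) + M * a n u with hg_def
        have hg_cont : Continuous g := by
          apply Continuous.add
          · exact continuous_const.mul (continuous_finset_sum _ (fun k _ => ha_cont k))
          · exact continuous_const.mul (ha_cont n)
        have hint_μ : IntervalIntegrable (fun u => (r - u) ^ (-ω) * μ u) volume τ r :=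
          (hker r hlt.le).mul_continuousOn
            (hcont.mono (by rw [uIcc_of_le hlt.le]; exact Icc_subset_Icc le_rfl hr.2))
        have hint_g : IntervalIntegrable (fun u => (r - u) ^ (-ω) * g u) volume τ r :=
          (hker r hlt.le).mul_continuousOn hg_cont.continuousOn
        have hmono : (∫ u in τ..r, (r - u) ^ (-ω) * μ u)
            ≤ ∫ u in τ..r, (r - u) ^ (-ω) * g u := by
          apply intervalIntegral.integral_mono_on hlt.le hint_μ hint_g
          intro u hu
          exact mul_le_mul_of_nonneg_left (ih u ⟨hu.1, hu.2.trans hr.2⟩)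
            (hker_nonneg r u hu.2)
        have hsplit : L * ∫ u in τ..r, (r - u) ^ (-ω) * g u
            = c * (∑ k ∈ Finset.range n, a (k + 1) r) + M * a (n + 1) r := by
          have e4 : (fun u => (r - u) ^ (-ω) * g u)
              = fun u => (∑ k ∈ Finset.range n, c * ((r - u) ^ (-ω) * a k u))
                  + M * ((r - u) ^ (-ω) * a n u) := by
            funext u
            rw [hg_def, mul_add]
            congr 1
            · simp only [Finset.mul_sum]
              exact Finset.sum_congr rfl (fun k _ => by ring)
            · ring
          have hIsum : IntervalIntegrable
              (fun u => ∑ k ∈ Finset.range n, c * ((r - u) ^ (-ω) * a k u)) volume τ r := by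
            have h := IntervalIntegrable.sum (Finset.range n)
              (f := fun k u => c * ((r - u) ^ (-ω) * a k u))
              (fun k _ => (hint_a k r hlt.le).const_mul c)
            have e : (∑ i ∈ Finset.range n, fun u => c * ((r - u) ^ (-ω) * a i u))
                = fun u => ∑ k ∈ Finset.range n, c * ((r - u) ^ (-ω) * a k u) := by
              funext u
              simp [Finset.sum_apply]
            rwa [e] at h
          rw [e4, intervalIntegral.integral_add hIsum ((hint_a n r hlt.le).const_mul M),
            intervalIntegral.integral_finset_sum
              (fun k _ => (hint_a k r hlt.le).const_mul c)]
          simp only [intervalIntegral.integral_const_mul]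
          rw [mul_add, Finset.mul_sum, Finset.mul_sum]
          congr 1
          · refine Finset.sum_congr rfl (fun k _ => ?_)
            rw [← hstep k r hlt]
            ring
          · rw [← hstep n r hlt]
            ring
        calc μ r ≤ c + L * ∫ u in τ..r, (r - u) ^ (-ω) * μ u := hineq r hr
          _ ≤ c + L * ∫ u in τ..r, (r - u) ^ (-ω) * g u := by
              have := mul_le_mul_of_nonneg_left hmono hL
              linarith
          _ = c + (c * (∑ k ∈ Finset.range n, a (k + 1) r) + M * a (n + 1) r) := by
              rw [hsplit]
          _ = c * (∑ k ∈ Finset.range (n + 1), a k r) + M * a (n + 1) r := by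
              rw [Finset.sum_range_succ', ha_zero r]
              ring
  -- pass to the limit
  set x : ℝ := C * (t - τ) ^ β with hx_def
  have htτ : (0:ℝ) ≤ t - τ := by linarith [ht.1]
  have hx0 : 0 ≤ x := mul_nonneg hC0 (Real.rpow_nonneg htτ _)
  have hto : ∀ k : ℕ, a k t = x ^ k / Real.Gamma (β * k + 1) := by
    intro k
    rw [ha_def, hx_def]
    congr 1
    rw [mul_pow, ← Real.rpow_natCast ((t - τ) ^ β) k, ← Real.rpow_mul htτ]
  have hsum : Summable (fun k : ℕ => x ^ k / Real.Gamma (β * k + 1)) :=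
    ml_summable hβ0 hx0
  have h1 : Filter.Tendsto (fun n => c * (∑ k ∈ Finset.range n, a k t) + M * a n t)
      Filter.atTop (nhds (c * mittagLeffler β x + M * 0)) := by
    have hml : mittagLeffler β x = ∑' k : ℕ, a k t := by
      have h0 : mittagLeffler β x = ∑' k : ℕ, x ^ k / Real.Gamma (β * k + 1) := rfl
      rw [h0]
      exact tsum_congr (fun k => (hto k).symm)
    apply Filter.Tendsto.add
    · have h2 := hsum.hasSum.tendsto_sum_nat
      simp only [← hto] at h2
      rw [hml]
      exact h2.const_mul c
    · have h3 := hsum.tendsto_atTop_zero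
      simp only [← hto] at h3
      exact h3.const_mul M
  have h4 := ge_of_tendsto h1 (Filter.Eventually.of_forall (fun n => main n t ht))
  simpa using h4
end
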